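/- Abstract form of Lemma 3.10 (quasi-optimality of Galerkin approximation of the constrained saddle-point problem): let (z, p) ∈ V × Q be the unique pair with a(z, φ) + a(φ, p) = F(φ) for all φ ∈ V and a(z, ξ) = 0 for all ξ ∈ Q. Then there exists a unique pair (z_h, p_h) ∈ V_h × Q_h with a(z_h, φ) + a(φ, p_h) = F(φ) for all φ ∈ V_h and a(z_h, ξ) = 0 for all ξ ∈ Q_h; moreover there is a constant C, depending only on the coercivity constant α and the continuity constant M of a (and not on V_h, Q_h, F), such that ‖z − z_h‖_a + ‖p − p_h‖_a ≤ C · ( inf_{v ∈ V_h} ‖z − v‖_a + inf_{q ∈ Q_h} ‖p − q‖_a ). -/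

import Mathlib

open InnerProductSpace

/-- Cauchy–Schwarz for a symmetric nonnegative bilinear form. -/
lemma aux_cs {V : Type} [AddCommGroup V] [Module ℝ V] (a : V →ₗ[ℝ] V →ₗ[ℝ] ℝ)
    (hsymm : ∀ u v, a u v = a v u) (hnn : ∀ v, 0 ≤ a v v) (u v : V) :
    (a u v) ^ 2 ≤ a u u * a v v := by
  have key : ∀ t : ℝ, 0 ≤ a u u + 2 * t * a u v + t ^ 2 * a v v := by
    intro t
    have h := hnn (u + t • v)
    have hexp : a (u + t • v) (u + t • v)
        = a u u + 2 * t * a u v + t ^ 2 * a v v := by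
      simp only [map_add, map_smul, LinearMap.add_apply, LinearMap.smul_apply,
        smul_eq_mul]
      rw [hsymm v u]; ring
    linarith [hexp ▸ h]
  rcases eq_or_lt_of_le (hnn v) with hv | hv
  · by_cases huv : a u v = 0
    · rw [huv]; nlinarith [hnn u, hnn v]
    · have h := key (-(a u u + 1) / (2 * a u v))
      rw [← hv, mul_zero] at h
      have ht : 2 * (-(a u u + 1) / (2 * a u v)) * a u v = -(a u u + 1) := by
        field_simp
      nlinarith [h, ht]
  · have h := hnn ((a v v) • u - (a u v) • v)
    have hexp : a ((a v v) • u - (a u v) • v) ((a v v) • u - (a u v) • v)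
        = (a v v) ^ 2 * a u u - 2 * (a v v) * (a u v) ^ 2 + (a u v) ^ 2 * (a v v) := by
      simp only [map_sub, map_smul, LinearMap.sub_apply, LinearMap.smul_apply,
        smul_eq_mul]
      rw [hsymm v u]; ring
    rw [hexp] at h
    nlinarith [h, hv]

/-- Solvability of `a u ξ = G ξ` on a closed subspace (Lax–Milgram). -/
lemma aux_solve {V : Type} [NormedAddCommGroup V] [InnerProductSpace ℝ V] [CompleteSpace V]
    (a : V →ₗ[ℝ] V →ₗ[ℝ] ℝ) (M α : ℝ) (hα : 0 < α)
    (hbound : ∀ u v, |a u v| ≤ M * ‖u‖ * ‖v‖)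
    (hcoer : ∀ v, α * ‖v‖ ^ 2 ≤ a v v)
    (S : Submodule ℝ V) (hS : IsClosed (S : Set V)) (G : V →L[ℝ] ℝ) :
    ∃ u ∈ S, ∀ ξ ∈ S, a u ξ = G ξ := by
  haveI : CompleteSpace S := hS.completeSpace_coe
  set a' : V →L[ℝ] V →L[ℝ] ℝ := LinearMap.mkContinuous₂ a M
    (fun u v => by simpa [Real.norm_eq_abs] using hbound u v) with ha'
  set B : S →L[ℝ] S →L[ℝ] ℝ := a'.bilinearComp S.subtypeL S.subtypeL with hB
  have hBapp : ∀ x y : S, B x y = a x y := fun x y => rfl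
  have hBcoer : IsCoercive B := by
    refine ⟨α, hα, fun u => ?_⟩
    have h := hcoer (u : V)
    have hn : ‖(u : V)‖ = ‖u‖ := rfl
    rw [hBapp]
    nlinarith [hn ▸ h]
  set GS : S →L[ℝ] ℝ := G.comp S.subtypeL with hGS
  set u : S := hBcoer.continuousLinearEquivOfBilin.symm ((toDual ℝ S).symm GS) with hu
  refine ⟨u, u.2, fun ξ hξ => ?_⟩
  have h1 : B u ⟨ξ, hξ⟩ = GS ⟨ξ, hξ⟩ := by
    rw [← hBcoer.continuousLinearEquivOfBilin_apply, hu,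
      ContinuousLinearEquiv.apply_symm_apply]
    exact toDual_symm_apply
  simpa [hBapp, hGS] using h1

set_option maxHeartbeats 2000000 in
theorem saddle_point_galerkin_quasi_optimal (α M : ℝ) (hα : 0 < α) (hM : 0 < M) :
    ∃ C : ℝ, 0 < C ∧
      ∀ (V : Type) [NormedAddCommGroup V] [InnerProductSpace ℝ V] [CompleteSpace V]
        (a : V →ₗ[ℝ] V →ₗ[ℝ] ℝ),
        (∀ u v, a u v = a v u) →
        (∀ u v, |a u v| ≤ M * ‖u‖ * ‖v‖) →
        (∀ v, α * ‖v‖ ^ 2 ≤ a v v) →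
        ∀ (Q : Submodule ℝ V), IsClosed (Q : Set V) →
        ∀ (F : V →L[ℝ] ℝ)
          (Vh Qh : Submodule ℝ V), IsClosed (Vh : Set V) → IsClosed (Qh : Set V) →
          Qh ≤ Q ⊓ Vh →
        ∀ z p : V, p ∈ Q → (∀ φ : V, a z φ + a φ p = F φ) → (∀ ξ ∈ Q, a z ξ = 0) →
          (∃! zp : V × V, zp.1 ∈ Vh ∧ zp.2 ∈ Qh ∧
              (∀ φ ∈ Vh, a zp.1 φ + a φ zp.2 = F φ) ∧ (∀ ξ ∈ Qh, a zp.1 ξ = 0)) ∧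
          (∀ zh ph : V, zh ∈ Vh → ph ∈ Qh →
            (∀ φ ∈ Vh, a zh φ + a φ ph = F φ) → (∀ ξ ∈ Qh, a zh ξ = 0) →
            Real.sqrt (a (z - zh) (z - zh)) + Real.sqrt (a (p - ph) (p - ph)) ≤
              C * ((⨅ v : Vh, Real.sqrt (a (z - v) (z - v))) +
                   (⨅ q : Qh, Real.sqrt (a (p - q) (p - q))))) := by
  refine ⟨3, by norm_num, ?_⟩
  intro V _ _ _ a hsymm hbound hcoer Q hQ F Vh Qh hVh hQh hle z p hpQ heq horth
  have hnn : ∀ v : V, 0 ≤ a v v := fun v =>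
    le_trans (by positivity) (hcoer v)
  have hzero : ∀ v : V, a v v ≤ 0 → v = 0 := by
    intro v hv
    have h := hcoer v
    have h2 : ‖v‖ ^ 2 ≤ 0 := by nlinarith
    have h3 : ‖v‖ = 0 := by nlinarith [sq_nonneg ‖v‖, norm_nonneg v]
    exact norm_eq_zero.mp h3
  -- continuous version of a
  set a' : V →L[ℝ] V →L[ℝ] ℝ := LinearMap.mkContinuous₂ a M
    (fun u v => by simpa [Real.norm_eq_abs] using hbound u v) with ha'
  -- the discretely divergence-free space W
  set W : Submodule ℝ V :=
    { carrier := {v | v ∈ Vh ∧ ∀ ξ ∈ Qh, a v ξ = 0}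
      add_mem' := fun {x y} hx hy => ⟨Vh.add_mem hx.1 hy.1, fun ξ hξ => by
        simp only [map_add, LinearMap.add_apply, hx.2 ξ hξ, hy.2 ξ hξ, add_zero]⟩
      zero_mem' := ⟨Vh.zero_mem, fun ξ hξ => by simp⟩
      smul_mem' := fun c x hx => ⟨Vh.smul_mem c hx.1, fun ξ hξ => by
        simp only [map_smul, LinearMap.smul_apply, hx.2 ξ hξ, smul_eq_mul, mul_zero]⟩ }
    with hWdef
  have hWmem : ∀ v : V, v ∈ W ↔ v ∈ Vh ∧ ∀ ξ ∈ Qh, a v ξ = 0 := fun v => Iff.rfl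
  have hWclosed : IsClosed (W : Set V) := by
    have hset : (W : Set V) = (Vh : Set V) ∩ ⋂ ξ : Qh, {v : V | a v (ξ : V) = 0} := by
      ext v
      simp only [SetLike.mem_coe, hWmem, Set.mem_inter_iff, Set.mem_iInter,
        Set.mem_setOf_eq, Subtype.forall]
    rw [hset]
    exact hVh.inter (isClosed_iInter fun ξ =>
      isClosed_eq (a'.flip (ξ : V)).continuous continuous_const)
  obtain ⟨ph, hphQh, hph⟩ := aux_solve a M α hα hbound hcoer Qh hQh F
  obtain ⟨zh, hzhW, hzh⟩ := aux_solve a M α hα hbound hcoer W hWclosed F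
  have hzhVh : zh ∈ Vh := hzhW.1
  have hzhorth : ∀ ξ ∈ Qh, a zh ξ = 0 := hzhW.2
  -- (zh, ph) solves the discrete problem
  have hsolve_h : ∀ φ ∈ Vh, a zh φ + a φ ph = F φ := by
    intro φ hφ
    obtain ⟨q, hqQh, hq⟩ := aux_solve a M α hα hbound hcoer Qh hQh (a' φ)
    have hq' : ∀ ξ ∈ Qh, a q ξ = a φ ξ := fun ξ hξ => hq ξ hξ
    have hqVh : q ∈ Vh := (hle hqQh).2
    have hφq : φ - q ∈ W := by
      refine ⟨Vh.sub_mem hφ hqVh, fun ξ hξ => ?_⟩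
      simp only [map_sub, LinearMap.sub_apply, hq' ξ hξ, sub_self]
    have l1 : a zh φ - a zh q = F φ - F q := by
      have h := hzh (φ - q) hφq
      simpa only [map_sub] using h
    have l2 : a φ ph - a q ph = 0 := by
      have h := hφq.2 ph hphQh
      simpa only [map_sub, LinearMap.sub_apply] using h
    have l3 : a q ph = F q := by rw [hsymm]; exact hph q hqQh
    have l4 : a zh q = 0 := hzhorth q hqQh
    linarith
  constructor
  · -- existence and uniqueness
    refine ⟨(zh, ph), ⟨hzhVh, hphQh, hsolve_h, hzhorth⟩, ?_⟩
    rintro ⟨z₂, p₂⟩ ⟨hz₂, hp₂, hs₂, ho₂⟩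
    have hmemδ : z₂ - zh ∈ Vh := Vh.sub_mem hz₂ hzhVh
    have e5 : a (z₂ - zh) p₂ = 0 := by
      simp only [map_sub, LinearMap.sub_apply, ho₂ p₂ hp₂, hzhorth p₂ hp₂, sub_self]
    have e6 : a (z₂ - zh) ph = 0 := by
      simp only [map_sub, LinearMap.sub_apply, ho₂ ph hphQh, hzhorth ph hphQh, sub_self]
    have h1 := hs₂ (z₂ - zh) hmemδ
    have h2 := hsolve_h (z₂ - zh) hmemδ
    have hm : a (z₂ - zh) (z₂ - zh) = a z₂ (z₂ - zh) - a zh (z₂ - zh) := by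
      simp only [map_sub, LinearMap.sub_apply]; ring
    have hδz0 : z₂ - zh = 0 := by
      apply hzero
      linarith
    have hz2 : z₂ = zh := sub_eq_zero.mp hδz0
    have hδpVh : p₂ - ph ∈ Vh := Vh.sub_mem ((hle hp₂).2) ((hle hphQh).2)
    have h3 := hs₂ (p₂ - ph) hδpVh
    have h4 := hsolve_h (p₂ - ph) hδpVh
    have hδp0 : p₂ - ph = 0 := by
      apply hzero
      have h5 : a (p₂ - ph) p₂ - a (p₂ - ph) ph = a (p₂ - ph) (p₂ - ph) := by
        simp only [map_sub, LinearMap.sub_apply]; try ring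
      rw [hz2] at h3
      have h6 : a (p₂ - ph) p₂ - a (p₂ - ph) ph = 0 := by linarith
      linarith
    have hp2 : p₂ = ph := sub_eq_zero.mp hδp0
    simp [hz2, hp2]
  · -- quasi-optimality
    intro zh' ph' hz' hp' hs' ho'
    haveI : Nonempty Vh := ⟨0⟩
    haveI : Nonempty Qh := ⟨0⟩
    have na_nonneg : ∀ v : V, 0 ≤ Real.sqrt (a v v) := fun v => Real.sqrt_nonneg _
    have hsq : ∀ v : V, Real.sqrt (a v v) * Real.sqrt (a v v) = a v v :=
      fun v => Real.mul_self_sqrt (hnn v)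
    have hCS : ∀ u v : V, a u v ≤ Real.sqrt (a u u) * Real.sqrt (a v v) := by
      intro u v
      have h := aux_cs a hsymm hnn u v
      calc a u v ≤ |a u v| := le_abs_self _
        _ = Real.sqrt ((a u v) ^ 2) := (Real.sqrt_sq_eq_abs _).symm
        _ ≤ Real.sqrt (a u u * a v v) := Real.sqrt_le_sqrt h
        _ = Real.sqrt (a u u) * Real.sqrt (a v v) := Real.sqrt_mul (hnn u) _
    have htri : ∀ x y : V, Real.sqrt (a (x + y) (x + y)) ≤
        Real.sqrt (a x x) + Real.sqrt (a y y) := by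
      intro x y
      have hexp : a (x + y) (x + y) = a x x + a x y + a y x + a y y := by
        simp only [map_add, LinearMap.add_apply]; ring
      have hle2 : a (x + y) (x + y) ≤ (Real.sqrt (a x x) + Real.sqrt (a y y)) ^ 2 := by
        have h1 := hCS x y
        have h2 := hsymm y x
        nlinarith [hsq x, hsq y]
      calc Real.sqrt (a (x + y) (x + y))
          ≤ Real.sqrt ((Real.sqrt (a x x) + Real.sqrt (a y y)) ^ 2) :=
            Real.sqrt_le_sqrt hle2
        _ = Real.sqrt (a x x) + Real.sqrt (a y y) := Real.sqrt_sq (by positivity)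
    -- Riesz relation for p on Q
    have hFp : ∀ ξ ∈ Q, a ξ p = F ξ := by
      intro ξ hξ
      have h1 := heq ξ
      have h2 := horth ξ hξ
      linarith
    -- Galerkin orthogonality for p
    have hgalp : ∀ ξ ∈ Qh, a (p - ph') ξ = 0 := by
      intro ξ hξ
      have h1 : a ξ p = F ξ := hFp ξ (hle hξ).1
      have h2 : a ξ ph' = F ξ := by
        have h3 := hs' ξ (hle hξ).2
        have h4 := ho' ξ hξ
        linarith
      have h5 : a (p - ph') ξ = a ξ p - a ξ ph' := by
        simp only [map_sub, LinearMap.sub_apply, hsymm p ξ, hsymm ph' ξ]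
      rw [h5, h1, h2, sub_self]
    -- Galerkin relation for z
    have hgalz : ∀ φ ∈ Vh, a (z - zh') φ = a φ (ph' - p) := by
      intro φ hφ
      have h1 := heq φ
      have h2 := hs' φ hφ
      have h3 : a (z - zh') φ = a z φ - a zh' φ := by
        simp only [map_sub, LinearMap.sub_apply]
      have h4 : a φ (ph' - p) = a φ ph' - a φ p := by
        simp only [map_sub]
      linarith
    -- estimate for p: a-orthogonal projection
    have hr : ∀ q ∈ Qh, Real.sqrt (a (p - ph') (p - ph')) ≤
        Real.sqrt (a (p - q) (p - q)) := by
      intro q hq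
      have hkey : a (p - ph') (p - ph') = a (p - ph') (p - q) := by
        have h1 := hgalp (q - ph') (Qh.sub_mem hq hp')
        have h2 : a (p - ph') (p - ph') - a (p - ph') (p - q)
            = a (p - ph') (q - ph') := by
          simp only [map_sub, LinearMap.sub_apply]; ring
        linarith
      rcases eq_or_lt_of_le (na_nonneg (p - ph')) with h0 | h0
      · rw [← h0]; exact na_nonneg _
      · have hx := hCS (p - ph') (p - q)
        rw [← hkey] at hx
        have h1 : Real.sqrt (a (p - ph') (p - ph')) * Real.sqrt (a (p - ph') (p - ph'))
            ≤ Real.sqrt (a (p - ph') (p - ph')) * Real.sqrt (a (p - q) (p - q)) := by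
          rw [hsq]; exact hx
        exact le_of_mul_le_mul_left h1 h0
    have hriq : Real.sqrt (a (p - ph') (p - ph')) ≤
        ⨅ q : Qh, Real.sqrt (a (p - (q : V)) (p - (q : V))) :=
      le_ciInf fun q => hr q q.2
    -- estimate for z
    have he : ∀ v ∈ Vh, Real.sqrt (a (z - zh') (z - zh')) ≤
        2 * Real.sqrt (a (z - v) (z - v)) + 2 * Real.sqrt (a (p - ph') (p - ph')) := by
      intro v hv
      have hsplit : a (z - zh') (z - zh')
          = a (z - zh') (z - v) + a (z - zh') (v - zh') := by
        simp only [map_sub, LinearMap.sub_apply]; ring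
      have h2 : a (z - zh') (v - zh') = a (v - zh') (ph' - p) :=
        hgalz (v - zh') (Vh.sub_mem hv hz')
      have h3 : a (z - zh') (z - v)
          ≤ Real.sqrt (a (z - zh') (z - zh')) * Real.sqrt (a (z - v) (z - v)) := hCS _ _
      have h4 : a (v - zh') (ph' - p)
          ≤ Real.sqrt (a (v - zh') (v - zh')) * Real.sqrt (a (ph' - p) (ph' - p)) :=
        hCS _ _
      have h5 : Real.sqrt (a (ph' - p) (ph' - p)) = Real.sqrt (a (p - ph') (p - ph')) := by
        have hneg : ph' - p = -(p - ph') := by abel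
        rw [hneg]
        simp only [map_neg, LinearMap.neg_apply, neg_neg]
      have h6 : Real.sqrt (a (v - zh') (v - zh'))
          ≤ Real.sqrt (a (z - v) (z - v)) + Real.sqrt (a (z - zh') (z - zh')) := by
        have hveq : v - zh' = -(z - v) + (z - zh') := by abel
        have h7 := htri (-(z - v)) (z - zh')
        have h8 : Real.sqrt (a (-(z - v)) (-(z - v))) = Real.sqrt (a (z - v) (z - v)) := by
          simp only [map_neg, LinearMap.neg_apply, neg_neg]
        rw [hveq]
        rw [h8] at h7
        exact h7
      set e := Real.sqrt (a (z - zh') (z - zh')) with he'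
      set d := Real.sqrt (a (z - v) (z - v)) with hd'
      set r := Real.sqrt (a (p - ph') (p - ph')) with hr'
      have h9 : a (v - zh') (ph' - p) ≤ (d + e) * r := by
        have h10 : Real.sqrt (a (v - zh') (v - zh')) * Real.sqrt (a (ph' - p) (ph' - p))
            ≤ (d + e) * r := by
          rw [h5]
          exact mul_le_mul_of_nonneg_right h6 (na_nonneg _)
        linarith
      have hee : e * e ≤ e * d + (d + e) * r := by
        have h11 := hsq (z - zh')
        linarith
      nlinarith [na_nonneg (z - zh'), na_nonneg (z - v), na_nonneg (p - ph'),
        mul_nonneg (na_nonneg (z - v)) (na_nonneg (p - ph')),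
        mul_nonneg (na_nonneg (z - zh')) (na_nonneg (p - ph')),
        mul_nonneg (na_nonneg (z - zh')) (na_nonneg (z - v))]
    have hez : Real.sqrt (a (z - zh') (z - zh')) ≤
        2 * (⨅ v : Vh, Real.sqrt (a (z - (v : V)) (z - (v : V))))
          + 2 * Real.sqrt (a (p - ph') (p - ph')) := by
      have h : (Real.sqrt (a (z - zh') (z - zh'))
            - 2 * Real.sqrt (a (p - ph') (p - ph'))) / 2
          ≤ ⨅ v : Vh, Real.sqrt (a (z - (v : V)) (z - (v : V))) :=
        le_ciInf (fun v => by have h1 := he v v.2; linarith)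
      linarith
    have hiv : 0 ≤ ⨅ v : Vh, Real.sqrt (a (z - (v : V)) (z - (v : V))) :=
      Real.iInf_nonneg fun v => na_nonneg _
    have hiq : 0 ≤ ⨅ q : Qh, Real.sqrt (a (p - (q : V)) (p - (q : V))) :=
      Real.iInf_nonneg fun q => na_nonneg _
    linarith
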